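/- Let A = Σ_{i=1}^r λ_i E_i∘conj(E_i), where λ_1,…,λ_r are pairwise distinct nonzero real numbers and E_1,…,E_r ∈ ℂ^{n×n} are symmetric matrices with ⟨E_i,E_j⟩ = δ_ij. Define recursively A_0 = A, and for j = 1,…,r: let X̂_j be any maximizer of |⟨A_{j−1}, X∘conj(X)⟩| over symmetric matrices X ∈ ℂ^{n×n} with ‖X‖_F = 1, let λ̂_j = ⟨A_{j−1}, X̂_j∘conj(X̂_j)⟩, and set A_j = A_{j−1} − λ̂_j X̂_j∘conj(X̂_j). Then there exist a permutation π of {1,…,r} and complex numbers c_1,…,c_r with |c_j| = 1 such that λ̂_j = λ_{π(j)} and X̂_j = c_j·E_{π(j)} for all j, and A_r = 0. -/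

import Mathlib

open scoped BigOperators

/-- Inner product of fourth-order complex tensors. -/
noncomputable def tInner {n : ℕ} (A B : Fin n → Fin n → Fin n → Fin n → ℂ) : ℂ :=
  ∑ i, ∑ j, ∑ k, ∑ l, A i j k l * starRingEnd ℂ (B i j k l)

/-- Frobenius norm of a complex matrix. -/
noncomputable def mNorm {n : ℕ} (X : Matrix (Fin n) (Fin n) ℂ) : ℝ :=
  Real.sqrt (∑ i, ∑ j, ‖X i j‖ ^ 2)

/-- The fourth-order tensor `X ∘ conj(X)`. -/
def conjOuter {n : ℕ} (X : Matrix (Fin n) (Fin n) ℂ) :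
    Fin n → Fin n → Fin n → Fin n → ℂ :=
  fun i j k l => X i j * starRingEnd ℂ (X k l)

noncomputable def emb {n : ℕ} (X : Matrix (Fin n) (Fin n) ℂ) : EuclideanSpace ℂ (Fin n × Fin n) :=
  WithLp.toLp 2 (fun p : Fin n × Fin n => X p.1 p.2)

lemma emb_inner {n : ℕ} (X Y : Matrix (Fin n) (Fin n) ℂ) :
    (inner ℂ (emb X) (emb Y) : ℂ) = ∑ i, ∑ j, starRingEnd ℂ (X i j) * Y i j := by
  simp [emb, PiLp.inner_apply, RCLike.inner_apply, Fintype.sum_prod_type]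
  exact Finset.sum_congr rfl fun i _ => Finset.sum_congr rfl fun j _ => mul_comm _ _

lemma sum_swap5 {α} [AddCommMonoid α] {n r : ℕ} (S : Finset (Fin r))
    (f : Fin r → Fin n → Fin n → Fin n → Fin n → α) :
    ∑ i, ∑ j, ∑ k, ∑ l, ∑ t ∈ S, f t i j k l
      = ∑ t ∈ S, ∑ i, ∑ j, ∑ k, ∑ l, f t i j k l := by
  conv_lhs => enter [2, i, 2, j, 2, k]; rw [Finset.sum_comm]
  conv_lhs => enter [2, i, 2, j]; rw [Finset.sum_comm]
  conv_lhs => enter [2, i]; rw [Finset.sum_comm]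
  rw [Finset.sum_comm]

lemma sum_swap_pair {α} [AddCommMonoid α] {n : ℕ} (g : Fin n → Fin n → Fin n → Fin n → α) :
    ∑ i, ∑ j, ∑ k, ∑ l, g i j k l = ∑ k, ∑ l, ∑ i, ∑ j, g i j k l := by
  have := Finset.sum_comm (s := (Finset.univ : Finset (Fin n × Fin n)))
    (t := (Finset.univ : Finset (Fin n × Fin n))) (f := fun p q => g p.1 p.2 q.1 q.2)
  simpa [Fintype.sum_prod_type] using this

lemma tInner_decomp {n r : ℕ} (lam : Fin r → ℝ) (E : Fin r → Matrix (Fin n) (Fin n) ℂ)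
    (S : Finset (Fin r)) (X : Matrix (Fin n) (Fin n) ℂ) :
    tInner (fun i j k l => ∑ t ∈ S, (lam t : ℂ) * E t i j * starRingEnd ℂ (E t k l)) (conjOuter X)
      = ∑ t ∈ S, (lam t : ℂ) * ((‖(inner ℂ (emb (E t)) (emb X) : ℂ)‖ ^ 2 : ℝ) : ℂ) := by
  unfold tInner conjOuter
  simp only [map_mul, Complex.conj_conj, Finset.sum_mul]
  rw [sum_swap5]
  refine Finset.sum_congr rfl fun t _ => ?_
  have hz : ((‖(inner ℂ (emb (E t)) (emb X) : ℂ)‖ ^ 2 : ℝ) : ℂ)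
      = starRingEnd ℂ (inner ℂ (emb (E t)) (emb X) : ℂ) * (inner ℂ (emb (E t)) (emb X) : ℂ) := by
    rw [mul_comm, Complex.mul_conj']
    norm_cast
  rw [hz, emb_inner]
  simp only [map_sum, map_mul, Complex.conj_conj, Finset.mul_sum, Finset.sum_mul]
  rw [sum_swap_pair (fun i j k l => ((lam t : ℂ) * E t i j * starRingEnd ℂ (E t k l) *
    (starRingEnd ℂ (X i j) * X k l)))]
  refine Finset.sum_congr rfl fun i _ => Finset.sum_congr rfl fun j _ =>
    Finset.sum_congr rfl fun k _ => Finset.sum_congr rfl fun l _ => ?_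
  ring

lemma mNorm_eq_norm_emb {n : ℕ} (X : Matrix (Fin n) (Fin n) ℂ) :
    Real.sqrt (∑ i, ∑ j, ‖X i j‖ ^ 2) = ‖emb X‖ := by
  rw [EuclideanSpace.norm_eq]
  congr 1
  rw [Fintype.sum_prod_type]
  rfl

lemma orth_emb {n r : ℕ} (E : Fin r → Matrix (Fin n) (Fin n) ℂ)
    (hEorth : ∀ s t, (∑ i, ∑ j, E s i j * starRingEnd ℂ (E t i j)) =
      if s = t then 1 else 0) :
    Orthonormal ℂ (fun t => emb (E t)) := by
  rw [orthonormal_iff_ite]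
  intro s t
  rw [emb_inner]
  have h := hEorth s t
  have : (∑ i, ∑ j, starRingEnd ℂ (E s i j) * E t i j)
      = starRingEnd ℂ (∑ i, ∑ j, E s i j * starRingEnd ℂ (E t i j)) := by
    simp [map_sum, mul_comm]
  rw [this, h]
  split <;> simp


lemma emb_inner_E {n r : ℕ} (E : Fin r → Matrix (Fin n) (Fin n) ℂ)
    (hEorth : ∀ s t, (∑ i, ∑ j, E s i j * starRingEnd ℂ (E t i j)) =
      if s = t then 1 else 0) (u v : Fin r) :
    (inner ℂ (emb (E u)) (emb (E v)) : ℂ) = if u = v then 1 else 0 :=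
  orthonormal_iff_ite.mp (orth_emb E hEorth) u v

lemma step_lemma {n r : ℕ} (lam : Fin r → ℝ) (E : Fin r → Matrix (Fin n) (Fin n) ℂ)
    (hlam0 : ∀ t, lam t ≠ 0) (hlaminj : Function.Injective lam)
    (hEsym : ∀ t, (E t).IsSymm)
    (hEorth : ∀ s t, (∑ i, ∑ j, E s i j * starRingEnd ℂ (E t i j)) =
      if s = t then 1 else 0)
    (S : Finset (Fin r)) (hS : S.Nonempty)
    (X : Matrix (Fin n) (Fin n) ℂ) (hXs : X.IsSymm) (hXn : mNorm X = 1)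
    (hmax : ∀ Y : Matrix (Fin n) (Fin n) ℂ, Y.IsSymm → mNorm Y = 1 →
      ‖tInner (fun i j k l => ∑ t ∈ S, (lam t : ℂ) * E t i j * starRingEnd ℂ (E t k l)) (conjOuter Y)‖ ≤
      ‖tInner (fun i j k l => ∑ t ∈ S, (lam t : ℂ) * E t i j * starRingEnd ℂ (E t k l)) (conjOuter X)‖) :
    ∃ t0 ∈ S, ∃ c : ℂ, ‖c‖ = 1 ∧
      tInner (fun i j k l => ∑ t ∈ S, (lam t : ℂ) * E t i j * starRingEnd ℂ (E t k l)) (conjOuter X) = (lam t0 : ℂ) ∧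
      X = c • E t0 := by
  classical
  set B : Fin n → Fin n → Fin n → Fin n → ℂ :=
    fun i j k l => ∑ t ∈ S, (lam t : ℂ) * E t i j * starRingEnd ℂ (E t k l) with hBdef
  have horth := orth_emb E hEorth
  set d : Fin r → ℂ := fun t => (inner ℂ (emb (E t)) (emb X) : ℂ) with hd
  set α : Fin r → ℝ := fun t => ‖d t‖ ^ 2 with hα
  have hα0 : ∀ t, 0 ≤ α t := fun t => sq_nonneg _
  have hXemb : ‖emb X‖ = 1 := by rw [← mNorm_eq_norm_emb]; exact hXn
  have hbessel : ∑ t ∈ S, α t ≤ 1 := by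
    have := horth.sum_inner_products_le (s := S) (emb X)
    rwa [hXemb, one_pow] at this
  have hval : tInner B (conjOuter X) = ∑ t ∈ S, (lam t : ℂ) * ((α t : ℝ) : ℂ) :=
    tInner_decomp lam E S X
  set ρ : ℝ := ∑ t ∈ S, lam t * α t with hρ
  have hvalρ : tInner B (conjOuter X) = (ρ : ℂ) := by
    rw [hval, hρ]; push_cast; ring_nf
  set M : ℝ := ‖tInner B (conjOuter X)‖ with hM
  have hMρ : M = |ρ| := by rw [hM, hvalρ, Complex.norm_real, Real.norm_eq_abs]
  have hEnorm1 : ∀ u, mNorm (E u) = 1 := by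
    intro u
    have h : (∑ i, ∑ j, E u i j * starRingEnd ℂ (E u i j)) = 1 := by
      rw [hEorth u u]; simp
    have h2 : ((∑ i, ∑ j, ‖E u i j‖ ^ 2 : ℝ) : ℂ) = 1 := by
      push_cast
      rw [← h]
      refine Finset.sum_congr rfl fun i _ => Finset.sum_congr rfl fun j _ => ?_
      rw [Complex.mul_conj']
    have h3 : (∑ i, ∑ j, ‖E u i j‖ ^ 2 : ℝ) = 1 := by exact_mod_cast h2
    rw [mNorm, h3, Real.sqrt_one]
  have hge : ∀ u ∈ S, |lam u| ≤ M := by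
    intro u hu
    have hm := hmax (E u) (hEsym u) (hEnorm1 u)
    have hv : tInner B (conjOuter (E u)) = (lam u : ℂ) := by
      rw [tInner_decomp lam E S (E u)]
      rw [Finset.sum_eq_single u
        (fun t htS htu => by
          rw [emb_inner_E E hEorth t u, if_neg htu]; simp)
        (fun h => absurd hu h)]
      rw [emb_inner_E E hEorth u u, if_pos rfl]
      simp
    rw [hv] at hm
    simpa [Complex.norm_real] using hm
  have hMpos : 0 < M := by
    obtain ⟨u, hu⟩ := hS
    exact lt_of_lt_of_le (abs_pos.mpr (hlam0 u)) (hge u hu)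
  have h1 : |ρ| ≤ ∑ t ∈ S, |lam t| * α t := by
    refine le_trans (Finset.abs_sum_le_sum_abs _ _) ?_
    refine Finset.sum_le_sum fun t ht => ?_
    rw [abs_mul, abs_of_nonneg (hα0 t)]
  have h2 : ∑ t ∈ S, |lam t| * α t ≤ M * ∑ t ∈ S, α t := by
    rw [Finset.mul_sum]
    exact Finset.sum_le_sum fun t ht => mul_le_mul_of_nonneg_right (hge t ht) (hα0 t)
  have hsumα : ∑ t ∈ S, α t = 1 := by
    have h5 : M ≤ M * ∑ t ∈ S, α t := by
      calc M = |ρ| := hMρ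
      _ ≤ _ := le_trans h1 h2
    have h4 : 1 ≤ ∑ t ∈ S, α t := by
      by_contra hcon
      push_neg at hcon
      nlinarith
    linarith
  have habsρ : |ρ| = M := hMρ.symm
  have key : ∃ t0 ∈ S, lam t0 = ρ ∧ α t0 = 1 := by
    have hsplit : ∀ (σ : ℝ), σ = 1 ∨ σ = -1 → ρ = σ * M →
        ∃ t0 ∈ S, lam t0 = ρ ∧ α t0 = 1 := by
      intro σ hσ hρσ
      have hσsq : σ * σ = 1 := by rcases hσ with h | h <;> rw [h] <;> ring
      have hz : ∑ t ∈ S, (M - σ * lam t) * α t = 0 := by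
        have hexp : ∑ t ∈ S, (M - σ * lam t) * α t
            = M * (∑ t ∈ S, α t) - σ * ∑ t ∈ S, lam t * α t := by
          rw [Finset.mul_sum, Finset.mul_sum, ← Finset.sum_sub_distrib]
          exact Finset.sum_congr rfl fun t _ => by ring
        rw [hexp, hsumα, ← hρ, hρσ]
        ring_nf
        nlinarith [hσsq]
      have hterm : ∀ t ∈ S, (M - σ * lam t) * α t = 0 := by
        rw [Finset.sum_eq_zero_iff_of_nonneg] at hz
        · exact hz
        · intro t ht
          have h6 := hge t ht
          have h7 : σ * lam t ≤ M := by
            rcases hσ with h | h <;> rw [h] <;>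
              [skip; skip] <;> cases abs_cases (lam t) <;> nlinarith
          exact mul_nonneg (by linarith) (hα0 t)
      obtain ⟨t0, ht0S, ht0⟩ : ∃ t0 ∈ S, α t0 ≠ 0 := by
        by_contra h
        push_neg at h
        have : ∑ t ∈ S, α t = 0 := Finset.sum_eq_zero h
        rw [hsumα] at this; norm_num at this
      have hlamt0 : σ * lam t0 = M := by
        have := hterm t0 ht0S
        rcases mul_eq_zero.mp this with h | h
        · linarith
        · exact absurd h ht0
      have hlamval : lam t0 = ρ := by
        rw [hρσ]
        rcases hσ with h | h <;> rw [h] at hlamt0 ⊢ <;> linarith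
      have hαother : ∀ t ∈ S, t ≠ t0 → α t = 0 := by
        intro t ht htne
        by_contra hne
        have := hterm t ht
        rcases mul_eq_zero.mp this with h | h
        · have h8 : σ * lam t = M := by linarith
          have h9 : lam t = lam t0 := by
            rcases hσ with h' | h' <;> rw [h'] at h8 hlamt0 <;> linarith
          exact htne (hlaminj h9)
        · exact hne h
      have hα1 : α t0 = 1 := by
        have h10 : ∑ t ∈ S, α t = α t0 :=
          Finset.sum_eq_single t0 (fun t ht htne => hαother t ht htne)
            (fun h => absurd ht0S h)
        rw [hsumα] at h10; linarith
      exact ⟨t0, ht0S, hlamval, hα1⟩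
    rcases abs_eq (le_of_lt hMpos) |>.mp habsρ with hc | hc
    · exact hsplit 1 (Or.inl rfl) (by linarith)
    · exact hsplit (-1) (Or.inr rfl) (by linarith)
  obtain ⟨t0, ht0S, hlamρ, hα1⟩ := key
  have hn1 : ‖d t0‖ = 1 := by
    have h11 : ‖d t0‖ ^ 2 = 1 := hα1
    nlinarith [norm_nonneg (d t0)]
  refine ⟨t0, ht0S, d t0, ?_, ?_, ?_⟩
  · exact hn1
  · rw [hvalρ, hlamρ]
  · have hEn : ‖emb (E t0)‖ = 1 := horth.1 t0
    have hresid : ‖emb X - d t0 • emb (E t0)‖ ^ 2 = 0 := by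
      rw [@norm_sub_sq ℂ, inner_smul_right]
      have hXE : (inner ℂ (emb X) (emb (E t0)) : ℂ) = starRingEnd ℂ (d t0) := by
        rw [hd]; exact (inner_conj_symm _ _).symm
      rw [hXE, norm_smul, hEn, hXemb]
      have h12 : RCLike.re (d t0 * starRingEnd ℂ (d t0)) = (1 : ℝ) := by
        rw [RCLike.mul_conj]
        simp [hn1]
      rw [h12, hn1]
      norm_num
    have hzero : emb X - d t0 • emb (E t0) = 0 := by
      have h6 : ‖emb X - d t0 • emb (E t0)‖ = 0 := by
        nlinarith [norm_nonneg (emb X - d t0 • emb (E t0))]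
      exact norm_eq_zero.mp h6
    funext i j
    have h7 : emb X (i, j) - (d t0 • emb (E t0)) (i, j) = 0 := congrArg (fun v => v (i, j)) hzero
    have h8 : X i j - d t0 * E t0 i j = 0 := h7
    have h9 : X i j = d t0 * E t0 i j := by
      have := sub_eq_zero.mp h8
      exact this
    simpa [Matrix.smul_apply, smul_eq_mul] using h9


/-- The SMROA algorithm exactly recovers the orthonormal matrix outer product
decomposition of a CPS tensor, up to a permutation and unimodular factors. -/
theorem smroa_exact_recovery {n r : ℕ}
    (lam : Fin r → ℝ) (E : Fin r → Matrix (Fin n) (Fin n) ℂ)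
    (hlam0 : ∀ t, lam t ≠ 0) (hlaminj : Function.Injective lam)
    (hEsym : ∀ t, (E t).IsSymm)
    (hEorth : ∀ s t, (∑ i, ∑ j, E s i j * starRingEnd ℂ (E t i j)) =
      if s = t then 1 else 0)
    (A : Fin (r + 1) → Fin n → Fin n → Fin n → Fin n → ℂ)
    (hA0 : ∀ i j k l, A 0 i j k l =
      ∑ t, (lam t : ℂ) * E t i j * starRingEnd ℂ (E t k l))
    (Xhat : Fin r → Matrix (Fin n) (Fin n) ℂ) (lamHat : Fin r → ℂ)
    (hXsym : ∀ s, (Xhat s).IsSymm) (hXnorm : ∀ s, mNorm (Xhat s) = 1)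
    (hXmax : ∀ s, ∀ X : Matrix (Fin n) (Fin n) ℂ, X.IsSymm → mNorm X = 1 →
      ‖tInner (A s.castSucc) (conjOuter X)‖ ≤
        ‖tInner (A s.castSucc) (conjOuter (Xhat s))‖)
    (hlamHat : ∀ s, lamHat s = tInner (A s.castSucc) (conjOuter (Xhat s)))
    (hrec : ∀ s : Fin r, ∀ i j k l, A s.succ i j k l =
      A s.castSucc i j k l - lamHat s * (Xhat s i j * starRingEnd ℂ (Xhat s k l))) :
    ∃ (π : Equiv.Perm (Fin r)) (c : Fin r → ℂ),
      (∀ s, ‖c s‖ = 1 ∧ lamHat s = (lam (π s) : ℂ) ∧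
        Xhat s = c s • E (π s)) ∧
      A (Fin.last r) = 0 := by
  classical
  have main : ∀ m : ℕ, ∀ hm : m ≤ r,
      ∃ (f : Fin r → Fin r) (c : Fin r → ℂ) (S : Finset (Fin r)),
        S.card + m = r ∧
        (∀ s₁ s₂ : Fin r, s₁.val < m → s₂.val < m → f s₁ = f s₂ → s₁ = s₂) ∧
        (∀ s : Fin r, s.val < m → f s ∉ S) ∧
        (∀ s : Fin r, s.val < m → ‖c s‖ = 1 ∧
          lamHat s = (lam (f s) : ℂ) ∧ Xhat s = c s • E (f s)) ∧
        (∀ i j k l, A ⟨m, Nat.lt_succ_of_le hm⟩ i j k l =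
          ∑ t ∈ S, (lam t : ℂ) * E t i j * starRingEnd ℂ (E t k l)) := by
    intro m
    induction m with
    | zero =>
      intro hm
      refine ⟨id, fun _ => 1, Finset.univ, by simp, ?_, ?_, ?_, ?_⟩
      · intro s₁ s₂ h; omega
      · intro s h; omega
      · intro s h; omega
      · intro i j k l
        have h0 : (⟨0, Nat.lt_succ_of_le hm⟩ : Fin (r + 1)) = 0 := by
          apply Fin.ext; simp
        rw [h0, hA0]
    | succ m ih =>
      intro hm
      obtain ⟨f, c, S, hcard, hinj, hdisj, hprop, hAm⟩ := ih (by omega)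
      have hSne : S.Nonempty := by
        rw [← Finset.card_pos]; omega
      set s0 : Fin r := ⟨m, by omega⟩ with hs0
      have hcs : s0.castSucc = (⟨m, Nat.lt_succ_of_le (by omega)⟩ : Fin (r + 1)) := by
        apply Fin.ext; simp [hs0]
      have hAcast : A s0.castSucc =
          fun i j k l => ∑ t ∈ S, (lam t : ℂ) * E t i j * starRingEnd ℂ (E t k l) := by
        funext i j k l
        rw [hcs]
        exact hAm i j k l
      obtain ⟨t0, ht0S, c0, hc0abs, hc0val, hXeq⟩ :=
        step_lemma lam E hlam0 hlaminj hEsym hEorth S hSne (Xhat s0) (hXsym s0)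
          (hXnorm s0) (by
            intro Y hYs hYn
            have := hXmax s0 Y hYs hYn
            rwa [hAcast] at this)
      have hlamt0 : lamHat s0 = (lam t0 : ℂ) := by
        rw [hlamHat s0, hAcast]
        exact hc0val
      refine ⟨Function.update f s0 t0, Function.update c s0 c0, S.erase t0,
        ?_, ?_, ?_, ?_, ?_⟩
      · rw [Finset.card_erase_of_mem ht0S]
        omega
      · intro s₁ s₂ h₁ h₂ heq
        have hcase : ∀ s : Fin r, s.val < m + 1 → s = s0 ∨ s.val < m := by
          intro s h
          rcases Nat.lt_succ_iff_lt_or_eq.mp h with h' | h'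
          · exact Or.inr h'
          · exact Or.inl (Fin.ext h')
        rcases hcase s₁ h₁ with rfl | h₁' <;> rcases hcase s₂ h₂ with rfl | h₂'
        · rfl
        · exfalso
          rw [Function.update_self, Function.update_of_ne (by
            intro h; rw [h] at h₂'; simp [hs0] at h₂') ] at heq
          exact hdisj s₂ h₂' (heq ▸ ht0S)
        · exfalso
          rw [Function.update_self, Function.update_of_ne (by
            intro h; rw [h] at h₁'; simp [hs0] at h₁')] at heq
          exact hdisj s₁ h₁' (heq.symm ▸ ht0S)
        · have hne₁ : s₁ ≠ s0 := by intro h; rw [h] at h₁'; simp [hs0] at h₁'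
          have hne₂ : s₂ ≠ s0 := by intro h; rw [h] at h₂'; simp [hs0] at h₂'
          rw [Function.update_of_ne hne₁, Function.update_of_ne hne₂] at heq
          exact hinj s₁ s₂ h₁' h₂' heq
      · intro s h
        by_cases hss : s = s0
        · subst hss
          rw [Function.update_self]
          exact Finset.notMem_erase _ _
        · rw [Function.update_of_ne hss]
          have hs' : s.val < m := by
            rcases Nat.lt_succ_iff_lt_or_eq.mp h with h' | h'
            · exact h'
            · exact absurd (Fin.ext h' : s = s0) hss
          intro hmem
          exact hdisj s hs' (Finset.erase_subset _ _ hmem)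
      · intro s h
        by_cases hss : s = s0
        · subst hss
          rw [Function.update_self, Function.update_self]
          exact ⟨hc0abs, hlamt0, hXeq⟩
        · have hs' : s.val < m := by
            rcases Nat.lt_succ_iff_lt_or_eq.mp h with h' | h'
            · exact h'
            · exact absurd (Fin.ext h' : s = s0) hss
          rw [Function.update_of_ne hss, Function.update_of_ne hss]
          exact hprop s hs'
      · intro i j k l
        have hsucc : (⟨m + 1, Nat.lt_succ_of_le hm⟩ : Fin (r + 1)) = s0.succ := by
          apply Fin.ext; simp [hs0]
        rw [hsucc, hrec s0 i j k l, hcs, hAm i j k l, hlamt0, hXeq]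
        have hcc : c0 * starRingEnd ℂ c0 = 1 := by
          rw [Complex.mul_conj']
          rw [hc0abs]
          norm_num
        rw [Finset.sum_erase_eq_sub ht0S]
        have : (lam t0 : ℂ) * ((c0 • E t0) i j * starRingEnd ℂ ((c0 • E t0) k l))
            = (lam t0 : ℂ) * E t0 i j * starRingEnd ℂ (E t0 k l) := by
          simp only [Matrix.smul_apply, smul_eq_mul, map_mul]
          calc (lam t0 : ℂ) * (c0 * E t0 i j * (starRingEnd ℂ c0 * starRingEnd ℂ (E t0 k l)))
              = (c0 * starRingEnd ℂ c0) * ((lam t0 : ℂ) * E t0 i j * starRingEnd ℂ (E t0 k l)) := by ring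
          _ = _ := by rw [hcc]; ring
        rw [this]
  obtain ⟨f, c, S, hcard, hinj, hdisj, hprop, hAr⟩ := main r le_rfl
  have hSempty : S = ∅ := Finset.card_eq_zero.mp (by omega)
  have hfinj : Function.Injective f := fun a b h => hinj a b a.isLt b.isLt h
  have hfbij : Function.Bijective f := Finite.injective_iff_bijective.mp hfinj
  refine ⟨Equiv.ofBijective f hfbij, c, ?_, ?_⟩
  · intro s
    exact hprop s s.isLt
  · funext i j k l
    have hlast : (Fin.last r) = (⟨r, Nat.lt_succ_of_le le_rfl⟩ : Fin (r + 1)) := rfl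
    rw [hlast, hAr i j k l, hSempty]
    simp
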